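/- Let A be the Seifert matrix of the torus knot T(2,2g+1): the 2g×2g matrix with A_{ii} = −1, A_{i,i+1} = 1, and all other entries 0. Then A − Aᵀ is invertible (it is a symplectic intersection form up to sign), and the monodromy matrix M = A⁻ᵀA satisfies M^{2(2g+1)} = I, i.e., M is periodic. -/

import Mathlib

open Matrix

lemma sum_ite_nat {n c : ℕ} (f : Fin n → ℚ) :
    (∑ t : Fin n, if (t : ℕ) = c then f t else 0) = if h : c < n then f ⟨c, h⟩ else 0 := by
  by_cases h : c < n
  · rw [dif_pos h, Finset.sum_eq_single (⟨c, h⟩ : Fin n)]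
    · simp
    · intro b _ hb
      rw [if_neg fun e => hb (Fin.ext e)]
    · simp
  · rw [dif_neg h, Finset.sum_eq_zero]
    intro t _
    refine if_neg fun e => h ?_
    exact e ▸ t.isLt

def seifA (g : ℕ) : Matrix (Fin (2*g)) (Fin (2*g)) ℚ :=
  of fun i j => if (i:ℕ) = j then -1 else if (i:ℕ)+1 = j then 1 else 0

def invA (g : ℕ) : Matrix (Fin (2*g)) (Fin (2*g)) ℚ :=
  of fun i j => if (i:ℕ) ≤ j then -1 else 0

def monoM (g : ℕ) : Matrix (Fin (2*g)) (Fin (2*g)) ℚ :=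
  of fun i j => if (j:ℕ) = 0 then 1 else if (j:ℕ) = (i:ℕ)+1 then -1 else 0

lemma seifA_mul_invA (g : ℕ) : seifA g * invA g = 1 := by
  ext i j
  rw [mul_apply]
  have step : ∀ t : Fin (2*g), seifA g i t * invA g t j =
      (if (t:ℕ) = (i:ℕ) then -(invA g t j) else 0)
      + (if (t:ℕ) = (i:ℕ)+1 then invA g t j else 0) := by
    intro t
    simp only [seifA, of_apply]
    split_ifs <;> first | ring1 | (exfalso; omega)
  rw [Finset.sum_congr rfl fun t _ => step t, Finset.sum_add_distrib,
    sum_ite_nat, sum_ite_nat]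
  rw [dif_pos i.isLt]
  by_cases h : (i:ℕ)+1 < 2*g
  · rw [dif_pos h]
    simp only [invA, of_apply, one_apply, Fin.ext_iff]
    split_ifs <;> first | ring1 | (exfalso; omega)
  · rw [dif_neg h]
    simp only [invA, of_apply, one_apply, Fin.ext_iff]
    have := j.isLt
    split_ifs <;> first | ring1 | (exfalso; omega)

lemma sum_ite_nat' {n c : ℕ} (f : Fin n → ℚ) :
    (∑ t : Fin n, if (t : ℕ) + 1 = c then f t else 0) =
      if h : c - 1 < n ∧ 1 ≤ c then f ⟨c - 1, h.1⟩ else 0 := by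
  by_cases h : c - 1 < n ∧ 1 ≤ c
  · rw [dif_pos h, Finset.sum_eq_single (⟨c - 1, h.1⟩ : Fin n)]
    · rw [if_pos]; simp; omega
    · intro b _ hb
      refine if_neg fun e => hb (Fin.ext ?_)
      simp; omega
    · simp
  · rw [dif_neg h, Finset.sum_eq_zero]
    intro t _
    refine if_neg fun e => h ?_
    constructor <;> omega

lemma transpose_invA_mul_seifA (g : ℕ) : (invA g)ᵀ * seifA g = monoM g := by
  ext i j
  rw [mul_apply]
  have step : ∀ t : Fin (2*g), (invA g)ᵀ i t * seifA g t j =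
      (if (t:ℕ) = (j:ℕ) then -(invA g t i) else 0)
      + (if (t:ℕ) + 1 = (j:ℕ) then invA g t i else 0) := by
    intro t
    simp only [transpose_apply, seifA, invA, of_apply]
    split_ifs <;> first | ring1 | (exfalso; omega)
  rw [Finset.sum_congr rfl fun t _ => step t, Finset.sum_add_distrib,
    sum_ite_nat, sum_ite_nat']
  rw [dif_pos j.isLt]
  have hi := i.isLt
  have hj := j.isLt
  by_cases hj1 : 1 ≤ (j:ℕ)
  · rw [dif_pos ⟨by omega, hj1⟩]
    simp only [invA, monoM, of_apply]
    split_ifs <;> first | ring1 | (exfalso; omega)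
  · rw [dif_neg (by omega)]
    simp only [invA, monoM, of_apply]
    split_ifs <;> first | ring1 | (exfalso; omega)

def Kmat (g : ℕ) : Matrix (Fin (2*g)) (Fin (2*g)) ℚ :=
  of fun i j => if (i:ℕ) % 2 = 0 ∧ (j:ℕ) % 2 = 1 ∧ (i:ℕ) < j then -1
    else if (i:ℕ) % 2 = 1 ∧ (j:ℕ) % 2 = 0 ∧ (j:ℕ) < i then 1 else 0

lemma skew_mul_Kmat (g : ℕ) : (seifA g - (seifA g)ᵀ) * Kmat g = 1 := by
  ext i j
  rw [mul_apply]
  have step : ∀ t : Fin (2*g), (seifA g - (seifA g)ᵀ) i t * Kmat g t j =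
      (if (t:ℕ) = (i:ℕ) + 1 then Kmat g t j else 0)
      + (if (t:ℕ) + 1 = (i:ℕ) then -(Kmat g t j) else 0) := by
    intro t
    simp only [Matrix.sub_apply, transpose_apply, seifA, of_apply]
    split_ifs <;> first | ring1 | (exfalso; omega)
  rw [Finset.sum_congr rfl fun t _ => step t, Finset.sum_add_distrib,
    sum_ite_nat, sum_ite_nat']
  have hi := i.isLt
  have hj := j.isLt
  by_cases h1 : (i:ℕ) + 1 < 2*g
  · rw [dif_pos h1]
    by_cases h2 : 1 ≤ (i:ℕ)
    · rw [dif_pos ⟨by omega, h2⟩]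
      simp only [Kmat, of_apply, one_apply, Fin.ext_iff]
      split_ifs <;> first | ring1 | (exfalso; omega)
    · rw [dif_neg (by omega)]
      simp only [Kmat, of_apply, one_apply, Fin.ext_iff]
      split_ifs <;> first | ring1 | (exfalso; omega)
  · rw [dif_neg h1]
    by_cases h2 : 1 ≤ (i:ℕ)
    · rw [dif_pos ⟨by omega, h2⟩]
      simp only [Kmat, of_apply, one_apply, Fin.ext_iff]
      split_ifs <;> first | ring1 | (exfalso; omega)
    · rw [dif_neg (by omega)]
      simp only [Kmat, of_apply, one_apply, Fin.ext_iff]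
      split_ifs <;> first | ring1 | (exfalso; omega)

def Fmat (g k : ℕ) : Matrix (Fin (2*g)) (Fin (2*g)) ℚ :=
  of fun i j => if k ≤ (j:ℕ) then (if (i:ℕ) + k = (j:ℕ) then (-1)^k else 0)
    else if (j:ℕ) + 1 = k then (-1)^(k+1)
    else if (i:ℕ) + k = 2*g + 1 + (j:ℕ) then (-1)^k else 0

lemma monoM_pow (g : ℕ) (hg : 1 ≤ g) : ∀ k, k ≤ 2*g+1 → (monoM g)^k = Fmat g k := by
  intro k
  induction k with
  | zero =>
    intro _
    ext i j
    simp only [pow_zero, Fmat, of_apply, one_apply, Fin.ext_iff, Nat.zero_le, if_true,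
      Nat.add_zero]
  | succ k ih =>
    intro hk
    rw [pow_succ', ih (by omega)]
    ext i j
    rw [mul_apply]
    have step : ∀ t : Fin (2*g), monoM g i t * Fmat g k t j =
        (if (t:ℕ) = 0 then Fmat g k t j else 0)
        + (if (t:ℕ) = (i:ℕ) + 1 then -(Fmat g k t j) else 0) := by
      intro t
      simp only [monoM, of_apply]
      split_ifs <;> first | ring1 | (exfalso; omega)
    rw [Finset.sum_congr rfl fun t _ => step t, Finset.sum_add_distrib,
      sum_ite_nat, sum_ite_nat]
    rw [dif_pos (by omega : 0 < 2*g)]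
    have hi := i.isLt
    have hj := j.isLt
    have hs : ((-1:ℚ))^(k+1) = -((-1)^k) := by rw [pow_succ]; ring
    have hs2 : ((-1:ℚ))^(k+2) = (-1)^k := by rw [pow_succ, pow_succ]; ring
    by_cases h1 : (i:ℕ) + 1 < 2*g
    · rw [dif_pos h1]
      simp only [Fmat, of_apply]
      split_ifs <;> first | ring1 | (exfalso; omega) | (rw [hs]; ring1) |
        (rw [hs2]; ring1) | (rw [show k+1+1 = k+2 from rfl, hs2]; ring1)
    · rw [dif_neg h1]
      simp only [Fmat, of_apply]
      split_ifs <;> first | ring1 | (exfalso; omega) | (rw [hs]; ring1) |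
        (rw [hs2]; ring1) | (rw [show k+1+1 = k+2 from rfl, hs2]; ring1)

lemma monoM_pow_odd (g : ℕ) (hg : 1 ≤ g) : (monoM g)^(2*g+1) = -1 := by
  rw [monoM_pow g hg (2*g+1) le_rfl]
  ext i j
  have hi := i.isLt
  have hj := j.isLt
  have hodd : ((-1:ℚ))^(2*g+1) = -1 := Odd.neg_one_pow ⟨g, by ring⟩
  simp only [Fmat, of_apply, Matrix.neg_apply, one_apply, Fin.ext_iff]
  split_ifs <;> first | (exfalso; omega) | ring1 | (rw [hodd]; try ring1)

/-- For the `2g × 2g` Seifert matrix `A` of the torus knot `T(2, 2g+1)` (with `−1` on the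
diagonal and `1` on the superdiagonal), `A − Aᵀ` is invertible and the homological
monodromy `M = A⁻ᵀ A` satisfies `M^(2(2g+1)) = 1`, i.e. `M` is periodic. -/
theorem torus_knot_monodromy_periodic (g : ℕ) (hg : 1 ≤ g)
    (A : Matrix (Fin (2 * g)) (Fin (2 * g)) ℚ)
    (hA : ∀ i j : Fin (2 * g), A i j =
      if i = j then -1 else if i.val + 1 = j.val then 1 else 0) :
    IsUnit (A - Aᵀ).det ∧ (Aᵀ⁻¹ * A) ^ (2 * (2 * g + 1)) = 1 := by
  have hAeq : A = seifA g := by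
    ext i j
    rw [hA]
    simp only [seifA, of_apply, Fin.ext_iff]
  subst hAeq
  constructor
  · exact IsUnit.of_mul_eq_one (Kmat g).det
      (by rw [← det_mul, skew_mul_Kmat, det_one])
  · have h1 : (invA g)ᵀ * (seifA g)ᵀ = 1 := by
      rw [← transpose_mul, seifA_mul_invA, transpose_one]
    rw [inv_eq_left_inv h1, transpose_invA_mul_seifA,
      show 2 * (2*g+1) = (2*g+1) * 2 by ring, pow_mul, monoM_pow_odd g hg, neg_one_sq]
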